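/- Let σ be an a-state, δ a p-state, and c a normalized conditional plan that is regressable with respect to (σ,δ). Then Regress*(c,δ) = δ' for some p-state δ' ≠ ⊥, and σ ∈ ext(δ'). -/

import Mathlib

open scoped Classical

/-! ## States -/

/-- A state: a pair of finite sets of fluents (true ones and false ones).
Used for both a-states (when the two sets are disjoint, see `St.OK`) and
p-states (partial states). -/
structure St (V : Type*) where
  T : Finset V
  F : Finset V
deriving DecidableEq

variable {V : Type*} [DecidableEq V]

/-- A pair of sets of fluents is a genuine (a- or p-) state when the sets are disjoint. -/
def St.OK (s : St V) : Prop := Disjoint s.T s.F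

/-- The extension set `ext(δ)` of a p-state `δ`: all a-states extending it. -/
def exts (δ : St V) : Set (St V) := {σ | σ.OK ∧ δ.T ⊆ σ.T ∧ δ.F ⊆ σ.F}

/-- `δ'` is a partial extension of `δ`. -/
def pext (δ δ' : St V) : Prop := δ.T ⊆ δ'.T ∧ δ.F ⊆ δ'.F

/-! ## Actions -/

/-- A non-sensing action: precondition literals (positive part `preP`, negative part
`preN`), and disjoint add and delete lists. -/
structure NAct (V : Type*) where
  preP : Finset V
  preN : Finset V
  add : Finset V
  del : Finset V
  hdisj : Disjoint add del

/-- A sensing action: precondition literals and a set of sensed fluents not occurring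
in the precondition. -/
structure SAct (V : Type*) where
  preP : Finset V
  preN : Finset V
  sens : Finset V
  hsens : Disjoint sens (preP ∪ preN)

/-- Executability of a non-sensing action in an a-state. -/
def NAct.execIn (a : NAct V) (σ : St V) : Prop := a.preP ⊆ σ.T ∧ a.preN ⊆ σ.F

/-- Executability of a sensing action in an a-state. -/
def SAct.execIn (a : SAct V) (σ : St V) : Prop := a.preP ⊆ σ.T ∧ a.preN ⊆ σ.F

/-- The result of executing a non-sensing action `a` in an a-state `σ`. -/
def NAct.res (a : NAct V) (σ : St V) : St V :=
  ⟨σ.T \ a.del ∪ a.add, σ.F \ a.add ∪ a.del⟩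

/-- The transition function `Φ` for a non-sensing action (`none` plays the role of `⊥`). -/
def PhiN (a : NAct V) (σ : St V) : Set (Option (St V)) :=
  {x | (a.execIn σ ∧ x = some (a.res σ)) ∨ (¬ a.execIn σ ∧ x = none)}

/-- The possible results of executing a sensing action `a` in an a-state `σ`. -/
def sres (a : SAct V) (σ : St V) : Set (St V) :=
  {σ' | σ'.OK ∧ σ.T ⊆ σ'.T ∧ σ.F ⊆ σ'.F ∧
    (σ'.T \ σ.T) ∪ (σ'.F \ σ.F) = a.sens \ (σ.T ∪ σ.F)}

/-- The transition function `Φ` for a sensing action (`none` plays the role of `⊥`). -/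
def PhiS (a : SAct V) (σ : St V) : Set (Option (St V)) :=
  {x | (a.execIn σ ∧ ∃ σ' ∈ sres a σ, x = some σ') ∨ (¬ a.execIn σ ∧ x = none)}

/-! ## Regression for single actions -/

/-- Applicability of a non-sensing action `a` in a p-state `δ`. -/
def AppN (a : NAct V) (δ : St V) : Prop :=
  ((a.add ∩ δ.T).Nonempty ∨ (a.del ∩ δ.F).Nonempty) ∧
  Disjoint a.add δ.F ∧ Disjoint a.del δ.T ∧
  a.preP ∩ δ.F ⊆ a.del ∧ a.preN ∩ δ.T ⊆ a.add

/-- Regression of a non-sensing action over a p-state (`none` is `⊥`). -/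
noncomputable def RegressN (a : NAct V) (δ : St V) : Option (St V) :=
  if AppN a δ then some ⟨δ.T \ a.add ∪ a.preP, δ.F \ a.del ∪ a.preN⟩ else none

/-- `X` is a sensed set of the set `Δ` of (distinct) p-states with respect to the sensing
action `a`, i.e. `X` is a nonempty subset of `Sens_a` and `Δ` is proper with respect to `X`. -/
def SensedSet (a : SAct V) (Δ : Finset (St V)) (X : Finset V) : Prop :=
  X.Nonempty ∧ X ⊆ a.sens ∧
  (∀ δ ∈ Δ, a.sens ⊆ δ.T ∪ δ.F) ∧
  Δ.card = 2 ^ X.card ∧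
  (∀ P Q : Finset V, Disjoint P Q → P ∪ Q = X →
    ∃! δ, δ ∈ Δ ∧ δ.T ∩ X = P ∧ δ.F ∩ X = Q) ∧
  (∀ δ ∈ Δ, ∀ δ' ∈ Δ, δ ≠ δ' → δ.T \ X = δ'.T \ X ∧ δ.F \ X = δ'.F \ X)

/-- Strong applicability of a sensing action in a set of p-states. -/
def StrongApp (a : SAct V) (Δ : Finset (St V)) : Prop :=
  (∃ X, SensedSet a Δ X) ∧ ∀ δ ∈ Δ, Disjoint a.preP δ.F ∧ Disjoint a.preN δ.T

/-- Applicability of a sensing action in a set of p-states: some family of partial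
extensions of the members of `Δ` makes `a` strongly applicable, and `Sens_a` is known
in every member of `Δ`. -/
def AppS (a : SAct V) (Δ : Finset (St V)) : Prop :=
  (∃ e : St V → St V, (∀ δ ∈ Δ, pext δ (e δ)) ∧ Set.InjOn e ↑Δ ∧ StrongApp a (Δ.image e)) ∧
  (∀ δ ∈ Δ, a.sens ⊆ δ.T ∪ δ.F)

/-- `S_{a,Δ}`: the sensed set of a family of partial extensions of `Δ`
(well-defined by the "unique sensed set" lemma). -/
noncomputable def SaD (a : SAct V) (Δ : Finset (St V)) : Finset V :=
  if h : ∃ X, ∃ e : St V → St V, (∀ δ ∈ Δ, pext δ (e δ)) ∧ Set.InjOn e ↑Δ ∧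
      SensedSet a (Δ.image e) X
  then h.choose else ∅

/-- Regression of a sensing action over a set of p-states (`none` is `⊥`). -/
noncomputable def RegressS (a : SAct V) (Δ : Finset (St V)) : Option (St V) :=
  if AppS a Δ then
    some ⟨(Δ.sup St.T) \ SaD a Δ ∪ a.preP, (Δ.sup St.F) \ SaD a Δ ∪ a.preN⟩
  else none

/-! ## Formulas (conjunctions of fluent literals) -/

/-- A conjunction of fluent literals, given by its positive and negative fluents. -/
abbrev Form (V : Type*) := Finset V × Finset V

/-- A conjunction of literals is consistent if no fluent occurs both positively and
negatively. -/
def Consistent (φ : Form V) : Prop := Disjoint φ.1 φ.2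

/-- Two conjunctions of literals are mutually exclusive. -/
def MutEx (φ ψ : Form V) : Prop := ¬ Disjoint φ.1 ψ.2 ∨ ¬ Disjoint ψ.1 φ.2

/-- A conjunction of literals holds in an a-state. -/
def holds (φ : Form V) (σ : St V) : Prop := φ.1 ⊆ σ.T ∧ φ.2 ⊆ σ.F

/-- `BIN S`: all binary representations of the nonempty set of fluents `S`. -/
def BIN (S : Finset V) : Finset (Form V) :=
  S.powerset.image (fun P => (P, S \ P))

/-- The set of conjunctions `χ` spans over the set of fluents `S`. -/
def spans (χ : Finset (Form V)) (S : Finset V) : Prop :=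
  ∃ φ : Form V, Consistent φ ∧ φ ∉ χ ∧ Disjoint S (φ.1 ∪ φ.2) ∧
    χ = (BIN S).image (fun ψ => (φ.1 ∪ ψ.1, φ.2 ∪ ψ.2))

/-! ## Conditional plans -/

/-- Conditional plans. -/
inductive Plan (V : Type*) where
  | empty : Plan V
  | action : NAct V → Plan V
  | pcase : SAct V → List (Form V × Plan V) → Plan V
  | seq : Plan V → Plan V → Plan V

/-- Well-formedness of a conditional plan: in every case plan the guards are
consistent and pairwise mutually exclusive conjunctions of literals. -/
inductive Plan.WF : Plan V → Prop
  | empty : Plan.WF .empty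
  | action (a : NAct V) : Plan.WF (.action a)
  | pcase (a : SAct V) (bs : List (Form V × Plan V)) :
      (∀ b ∈ bs, Consistent b.1) →
      bs.Pairwise (fun b b' => MutEx b.1 b'.1) →
      (∀ b ∈ bs, Plan.WF b.2) → Plan.WF (.pcase a bs)
  | seq {c₁ c₂ : Plan V} : Plan.WF c₁ → Plan.WF c₂ → Plan.WF (.seq c₁ c₂)

/-- The graph of the extended transition function `Φ*`:
`PhiStarR c x y` means `y ∈ Φ*(c, x)` (where `none` is `⊥`). -/
inductive PhiStarR : Plan V → Option (St V) → Option (St V) → Prop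
  | bot (c : Plan V) : PhiStarR c none none
  | empty (σ : St V) : PhiStarR .empty (some σ) (some σ)
  | action (a : NAct V) (σ : St V) (x : Option (St V)) :
      x ∈ PhiN a σ → PhiStarR (.action a) (some σ) x
  | caseBot (a : SAct V) (bs : List (Form V × Plan V)) (σ : St V) :
      none ∈ PhiS a σ → PhiStarR (.pcase a bs) (some σ) none
  | caseHit (a : SAct V) (bs : List (Form V × Plan V)) (σ σ' : St V)
      (φ : Form V) (p : Plan V) (x : Option (St V)) :
      some σ' ∈ PhiS a σ → (φ, p) ∈ bs → holds φ σ' →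
      PhiStarR p (some σ') x → PhiStarR (.pcase a bs) (some σ) x
  | caseMiss (a : SAct V) (bs : List (Form V × Plan V)) (σ σ' : St V) :
      some σ' ∈ PhiS a σ → (∀ b ∈ bs, ¬ holds b.1 σ') →
      PhiStarR (.pcase a bs) (some σ) none
  | seq (c₁ c₂ : Plan V) (σ : St V) (y x : Option (St V)) :
      PhiStarR c₁ (some σ) y → PhiStarR c₂ y x → PhiStarR (.seq c₁ c₂) (some σ) x

/-- `R(cᵢ,δ)` from the definition of `Regress*` on case plans (the consistent case). -/
def Rform (φ : Form V) (st : St V) : St V := ⟨st.T ∪ φ.1, st.F ∪ φ.2⟩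

/-- The graph of the extended regression function `Regress*`:
`RegStarR c x y` means `Regress*(c, x) = y` (where `none` is `⊥`). -/
inductive RegStarR : Plan V → Option (St V) → Option (St V) → Prop
  | bot (c : Plan V) : RegStarR c none none
  | empty (δ : St V) : RegStarR .empty (some δ) (some δ)
  | action (a : NAct V) (δ : St V) : RegStarR (.action a) (some δ) (RegressN a δ)
  | caseBot (a : SAct V) (bs : List (Form V × Plan V)) (δ : St V)
      (b : Form V × Plan V) :
      b ∈ bs → RegStarR b.2 (some δ) none → RegStarR (.pcase a bs) (some δ) none
  | caseRBot (a : SAct V) (bs : List (Form V × Plan V)) (δ : St V)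
      (b : Form V × Plan V) (st : St V) :
      b ∈ bs → RegStarR b.2 (some δ) (some st) →
      ¬ (Disjoint b.1.1 st.F ∧ Disjoint b.1.2 st.T) →
      RegStarR (.pcase a bs) (some δ) none
  | caseGo (a : SAct V) (bs : List (Form V × Plan V)) (δ : St V)
      (r : Form V × Plan V → St V) :
      (∀ b ∈ bs, RegStarR b.2 (some δ) (some (r b))) →
      (∀ b ∈ bs, Disjoint b.1.1 (r b).F ∧ Disjoint b.1.2 (r b).T) →
      RegStarR (.pcase a bs) (some δ)
        (RegressS a ((bs.map (fun b => Rform b.1 (r b))).toFinset))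
  | seq (c₁ c₂ : Plan V) (δ : St V) (y x : Option (St V)) :
      RegStarR c₂ (some δ) y → RegStarR c₁ y x → RegStarR (.seq c₁ c₂) (some δ) x

/-! ## Subplans, redundancy, regressability -/

/-- One editing step producing a "smaller" plan: removing an instance of a
non-sensing action, removing a case plan or one of its branches, or replacing a
sensing action by a sub sensing action; possibly deep inside the plan. -/
inductive Edit : Plan V → Plan V → Prop
  | dropAct (a : NAct V) : Edit (.action a) .empty
  | dropCase (a : SAct V) (bs : List (Form V × Plan V)) : Edit (.pcase a bs) .empty
  | dropBranch (a : SAct V) (b : Form V × Plan V) (l₁ l₂ : List (Form V × Plan V)) :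
      Edit (.pcase a (l₁ ++ b :: l₂)) (.pcase a (l₁ ++ l₂))
  | subSense (a a' : SAct V) (bs : List (Form V × Plan V)) :
      a'.preP = a.preP → a'.preN = a.preN → a'.sens ⊂ a.sens →
      Edit (.pcase a bs) (.pcase a' bs)
  | inBranch (a : SAct V) (φ : Form V) (p p' : Plan V) (l₁ l₂ : List (Form V × Plan V)) :
      Edit p p' →
      Edit (.pcase a (l₁ ++ (φ, p) :: l₂)) (.pcase a (l₁ ++ (φ, p') :: l₂))
  | seqL {c₁ c₁' : Plan V} (c₂ : Plan V) : Edit c₁ c₁' → Edit (.seq c₁ c₂) (.seq c₁' c₂)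
  | seqR {c₂ c₂' : Plan V} (c₁ : Plan V) : Edit c₂ c₂' → Edit (.seq c₁ c₂) (.seq c₁ c₂')

/-- `c'` is a subplan of `c`. -/
def IsSubplan (c' c : Plan V) : Prop := Relation.TransGen Edit c c'

/-- `⊥ ∉ Φ*(c,σ)` and `Φ*(c,σ) ⊆ ext(δ)`. -/
def Achieves (c : Plan V) (σ δ : St V) : Prop :=
  ∀ x, PhiStarR c (some σ) x → ∃ σ' ∈ exts δ, x = some σ'

/-- `c` is redundant with respect to `(σ,δ)`. -/
def Redundant (c : Plan V) (σ δ : St V) : Prop :=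
  Achieves c σ δ ∧ ∃ c', IsSubplan c' c ∧ Achieves c' σ δ

/-- A case plan `a;case(φ₁→c₁,…,φₙ→cₙ)` is possibly regressable. -/
def PRCase (a : SAct V) (bs : List (Form V × Plan V)) : Prop :=
  (∃ S : Finset V, S.Nonempty ∧ S ⊆ a.sens ∧ spans (bs.map Prod.fst).toFinset S) ∧
  ∀ b ∈ bs, a.sens ⊆ b.1.1 ∪ b.1.2

/-- Every case plan occurring in `c` is possibly regressable. -/
inductive AllCasesPR : Plan V → Prop
  | empty : AllCasesPR .empty
  | action (a : NAct V) : AllCasesPR (.action a)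
  | pcase (a : SAct V) (bs : List (Form V × Plan V)) :
      PRCase a bs → (∀ b ∈ bs, AllCasesPR b.2) → AllCasesPR (.pcase a bs)
  | seq {c₁ c₂ : Plan V} : AllCasesPR c₁ → AllCasesPR c₂ → AllCasesPR (.seq c₁ c₂)

/-- `c` is regressable with respect to `(σ,δ)`. -/
def Regressable (c : Plan V) (σ δ : St V) : Prop :=
  AllCasesPR c ∧ Achieves c σ δ ∧ ¬ Redundant c σ δ

/-! ## Normalized plans -/

/-- Normalized conditional plans: a sequence of non-sensing actions followed by
either nothing or a case plan all of whose branches are normalized. -/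
inductive Normalized : Plan V → Prop
  | empty : Normalized .empty
  | single (a : NAct V) : Normalized (.action a)
  | pcase (a : SAct V) (bs : List (Form V × Plan V)) :
      (∀ b ∈ bs, Normalized b.2) → Normalized (.pcase a bs)
  | cons (a : NAct V) {c : Plan V} : Normalized c → Normalized (.seq (.action a) c)

/-- `normSeq c k` normalizes the plan `c ; k`, assuming `k` is already normalized. -/
def normSeq : Plan V → Plan V → Plan V
  | .empty, k => k
  | .action a, k => .seq (.action a) k
  | .pcase a bs, k => .pcase a (bs.attach.map (fun b => (b.1.1, normSeq b.1.2 k)))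
  | .seq c₁ c₂, k => normSeq c₁ (normSeq c₂ k)
termination_by c _ => sizeOf c
decreasing_by
  all_goals simp_wf
  all_goals first
    | omega
    | (have h := List.sizeOf_lt_of_mem b.2
       obtain ⟨⟨f, p⟩, hb⟩ := b
       simp at *
       omega)

/-- `normalized(c)`. -/
def normalizePlan (c : Plan V) : Plan V := normSeq c .empty

/-! ## Sequences of non-sensing actions -/

/-- The conditional plan `a₁;…;aₙ;k` determined by a list of non-sensing actions. -/
def seqP : List (NAct V) → Plan V → Plan V
  | [], k => k
  | a :: t, k => .seq (.action a) (seqP t k)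

instance (a : NAct V) (σ : St V) : Decidable (a.execIn σ) :=
  inferInstanceAs (Decidable (a.preP ⊆ σ.T ∧ a.preN ⊆ σ.F))

/-- `Φ*` specialized to a sequence of non-sensing actions, as a function
(`none` is `⊥`). -/
def runSeq : List (NAct V) → St V → Option (St V)
  | [], σ => some σ
  | a :: t, σ => if a.execIn σ then runSeq t (a.res σ) else none

/-- `Regress*` specialized to a sequence of non-sensing actions, as a function
(`none` is `⊥`). -/
noncomputable def regSeq : List (NAct V) → St V → Option (St V)
  | [], δ => some δ
  | a :: t, δ => match regSeq t δ with
      | none => none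
      | some δ' => RegressN a δ'

/-- For a sequence of non-sensing actions: `⊥ ∉ Φ*(l,σ)` and `Φ*(l,σ) ⊆ ext(δ)`. -/
def SeqAchieves (l : List (NAct V)) (σ δ : St V) : Prop :=
  ∃ σ', runSeq l σ = some σ' ∧ σ' ∈ exts δ

/-- Redundancy of a sequence of non-sensing actions with respect to `(σ,δ)`
(a subplan of a sequence is a proper sublist of it). -/
def SeqRedundant (l : List (NAct V)) (σ δ : St V) : Prop :=
  SeqAchieves l σ δ ∧ ∃ l', List.Sublist l' l ∧ l' ≠ l ∧ SeqAchieves l' σ δ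

/-- Regressability of a sequence of non-sensing actions with respect to `(σ,δ)`. -/
def SeqRegressable (l : List (NAct V)) (σ δ : St V) : Prop :=
  SeqAchieves l σ δ ∧ ¬ SeqRedundant l σ δ

/-! ## The regression search algorithm -/

/-- The sets of plan-state pairs reachable by the algorithm `Solve(P)` from the
initial set `{⟨[], δ_G⟩}` using steps 4.1 (non-sensing regression) and 4.2
(sensing regression). -/
inductive Reach (δG : St V) : Set (Plan V × St V) → Prop
  | init : Reach δG {(Plan.empty, δG)}
  | step1 {N : Set (Plan V × St V)} (c : Plan V) (δ : St V) (a : NAct V) (δ' : St V) :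
      Reach δG N → (c, δ) ∈ N → RegressN a δ = some δ' →
      (∀ p ∈ N, p.2 ≠ δ') →
      Reach δG (insert (Plan.seq (.action a) c, δ') N)
  | step2 {N : Set (Plan V × St V)} (a : SAct V) (bs : List (Form V × Plan V))
      (ds : Form V × Plan V → St V) (S : Finset V) (δ' : St V) :
      Reach δG N →
      (∀ b ∈ bs, (b.2, ds b) ∈ N) →
      S.Nonempty → S ⊆ a.sens → spans (bs.map Prod.fst).toFinset S →
      (∀ b ∈ bs, (Rform b.1 (ds b)).OK) →
      RegressS a ((bs.map (fun b => Rform b.1 (ds b))).toFinset) = some δ' →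
      (∀ p ∈ N, p.2 ≠ δ') →
      Reach δG (insert (Plan.pcase a bs, δ') N)

/-- `N` is saturated: no step of type 4.1 or 4.2 can produce a p-state not
already occurring in `N`. -/
def Saturated (N : Set (Plan V × St V)) : Prop :=
  (∀ (c : Plan V) (δ : St V) (a : NAct V) (δ' : St V),
      (c, δ) ∈ N → RegressN a δ = some δ' → ∃ p ∈ N, p.2 = δ') ∧
  (∀ (a : SAct V) (bs : List (Form V × Plan V)) (ds : Form V × Plan V → St V)
      (S : Finset V) (δ' : St V),
      (∀ b ∈ bs, (b.2, ds b) ∈ N) →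
      S.Nonempty → S ⊆ a.sens → spans (bs.map Prod.fst).toFinset S →
      (∀ b ∈ bs, (Rform b.1 (ds b)).OK) →
      RegressS a ((bs.map (fun b => Rform b.1 (ds b))).toFinset) = some δ' →
      ∃ p ∈ N, p.2 = δ')

/-! ## Auxiliary lemmas -/

section Aux

lemma St.ext' {s t : St V} (hT : s.T = t.T) (hF : s.F = t.F) : s = t := by
  cases s; cases t; simp_all

lemma mem_exts {σ δ : St V} : σ ∈ exts δ ↔ σ.OK ∧ δ.T ⊆ σ.T ∧ δ.F ⊆ σ.F := Iff.rfl

lemma res_OK {a : NAct V} {σ : St V} (hσ : σ.OK) : (a.res σ).OK := by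
  have h := a.hdisj
  rw [St.OK, Finset.disjoint_left] at *
  intro x hx hx'
  simp only [NAct.res, Finset.mem_union, Finset.mem_sdiff] at hx hx'
  rcases hx with ⟨h1, h2⟩ | h1 <;> rcases hx' with ⟨h3, h4⟩ | h3
  · exact hσ h1 h3
  · exact h2 h3
  · exact h4 h1
  · exact h h1 h3

lemma PhiStar_none {c : Plan V} {x : Option (St V)} (h : PhiStarR c none x) : x = none := by
  cases h; rfl

lemma RegStar_none {c : Plan V} {x : Option (St V)} (h : RegStarR c none x) : x = none := by
  cases h; rfl

lemma PhiN_none {a : NAct V} {σ : St V} (h : ¬ a.execIn σ) : none ∈ PhiN a σ :=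
  Or.inr ⟨h, rfl⟩

lemma PhiN_some {a : NAct V} {σ : St V} {x : Option (St V)} (hx : x ∈ PhiN a σ)
    (h : a.execIn σ) : x = some (a.res σ) := by
  rcases hx with ⟨_, h2⟩ | ⟨h1, _⟩
  · exact h2
  · exact absurd h h1

lemma PhiS_none {a : SAct V} {σ : St V} (h : ¬ a.execIn σ) : none ∈ PhiS a σ :=
  Or.inr ⟨h, rfl⟩

lemma PhiS_some_elim {a : SAct V} {σ σ' : St V} (hx : some σ' ∈ PhiS a σ) :
    a.execIn σ ∧ σ' ∈ sres a σ := by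
  rcases hx with ⟨h1, σ'', h2, h3⟩ | ⟨_, h⟩
  · cases Option.some.inj h3; exact ⟨h1, h2⟩
  · cases h

lemma PhiS_some_intro {a : SAct V} {σ σ' : St V} (he : a.execIn σ) (hs : σ' ∈ sres a σ) :
    some σ' ∈ PhiS a σ := Or.inl ⟨he, σ', hs, rfl⟩

lemma sres_sens_known {a : SAct V} {σ σ' : St V} (h : σ' ∈ sres a σ) :
    a.sens ⊆ σ'.T ∪ σ'.F := by
  obtain ⟨hok, hT, hF, heq⟩ := h
  intro f hf
  by_cases hk : f ∈ σ.T ∪ σ.F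
  · rcases Finset.mem_union.1 hk with h | h
    · exact Finset.mem_union_left _ (hT h)
    · exact Finset.mem_union_right _ (hF h)
  · have : f ∈ (σ'.T \ σ.T) ∪ (σ'.F \ σ.F) := by
      rw [heq]; exact Finset.mem_sdiff.2 ⟨hf, hk⟩
    rcases Finset.mem_union.1 this with h | h
    · exact Finset.mem_union_left _ (Finset.mem_sdiff.1 h).1
    · exact Finset.mem_union_right _ (Finset.mem_sdiff.1 h).1

/-- Construct a member of `sres a σ` deciding the unknown sensed fluents: those in `P`
become true, the rest become false. -/
lemma mem_sres_of {a : SAct V} {σ : St V} (hσ : σ.OK) (P : Finset V)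
    (hP : P ⊆ a.sens \ (σ.T ∪ σ.F)) :
    (St.mk (σ.T ∪ P) (σ.F ∪ ((a.sens \ (σ.T ∪ σ.F)) \ P))) ∈ sres a σ := by
  have hPu : ∀ f ∈ P, f ∉ σ.T ∪ σ.F := fun f hf => (Finset.mem_sdiff.1 (hP hf)).2
  refine ⟨?_, Finset.subset_union_left, Finset.subset_union_left, ?_⟩
  · rw [St.OK, Finset.disjoint_left]
    intro x hx hx'
    simp only [Finset.mem_union, Finset.mem_sdiff] at hx hx'
    rcases hx with hx | hx <;> rcases hx' with hx' | hx'
    · exact (Finset.disjoint_left.1 hσ) hx hx'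
    · exact hx'.1.2 (Or.inl hx)
    · exact hPu _ hx (Finset.mem_union_right _ hx')
    · exact hx'.2 hx
  · ext f
    simp only [Finset.mem_union, Finset.mem_sdiff]
    constructor
    · rintro (⟨(h | h), h2⟩ | ⟨(h | h), h2⟩)
      · exact absurd h h2
      · exact ⟨(Finset.mem_sdiff.1 (hP h)).1,
          fun hc => (Finset.mem_sdiff.1 (hP h)).2 (Finset.mem_union.2 hc)⟩
      · exact absurd h h2
      · exact h.1
    · intro hf
      by_cases hp : f ∈ P
      · exact Or.inl ⟨Or.inr hp, fun h => hf.2 (Or.inl h)⟩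
      · exact Or.inr ⟨Or.inr ⟨⟨hf.1, hf.2⟩, hp⟩, fun h => hf.2 (Or.inr h)⟩

/-- If the whole `sens` is decided by `φ`, then the T- and F-parts of any `σ' ∈ sres a σ`
in which `φ` holds are determined. -/
lemma sres_parts {a : SAct V} {σ σ' : St V} {φ : Form V} (hφ : a.sens ⊆ φ.1 ∪ φ.2)
    (h : σ' ∈ sres a σ) (hh : holds φ σ') :
    σ'.T = σ.T ∪ (a.sens \ (σ.T ∪ σ.F)) ∩ φ.1 ∧
    σ'.F = σ.F ∪ (a.sens \ (σ.T ∪ σ.F)) ∩ φ.2 := by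
  obtain ⟨hok, hT, hF, heq⟩ := h
  have hdisj := Finset.disjoint_left.1 hok
  constructor
  · ext f
    simp only [Finset.mem_union, Finset.mem_inter, Finset.mem_sdiff]
    constructor
    · intro hf
      by_cases h0 : f ∈ σ.T
      · exact Or.inl h0
      · have h1 : f ∈ (σ'.T \ σ.T) ∪ (σ'.F \ σ.F) :=
          Finset.mem_union_left _ (Finset.mem_sdiff.2 ⟨hf, h0⟩)
        rw [heq] at h1
        have h2 := Finset.mem_sdiff.1 h1
        rcases Finset.mem_union.1 (hφ h2.1) with h3 | h3
        · exact Or.inr ⟨⟨h2.1, fun hc => h2.2 (Finset.mem_union.2 hc)⟩, h3⟩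
        · exact absurd (hh.2 h3) (fun hc => hdisj hf hc)
    · rintro (hf | ⟨⟨h1, h2⟩, h3⟩)
      · exact hT hf
      · exact hh.1 h3
  · ext f
    simp only [Finset.mem_union, Finset.mem_inter, Finset.mem_sdiff]
    constructor
    · intro hf
      by_cases h0 : f ∈ σ.F
      · exact Or.inl h0
      · have h1 : f ∈ (σ'.T \ σ.T) ∪ (σ'.F \ σ.F) :=
          Finset.mem_union_right _ (Finset.mem_sdiff.2 ⟨hf, h0⟩)
        rw [heq] at h1
        have h2 := Finset.mem_sdiff.1 h1
        rcases Finset.mem_union.1 (hφ h2.1) with h3 | h3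
        · exact absurd (hh.1 h3) (fun hc => hdisj hc hf)
        · exact Or.inr ⟨⟨h2.1, fun hc => h2.2 (Finset.mem_union.2 hc)⟩, h3⟩
    · rintro (hf | ⟨⟨h1, h2⟩, h3⟩)
      · exact hF hf
      · exact hh.2 h3

lemma sres_unique {a : SAct V} {σ σ₁ σ₂ : St V} {φ : Form V} (hφ : a.sens ⊆ φ.1 ∪ φ.2)
    (h₁ : σ₁ ∈ sres a σ) (h₂ : σ₂ ∈ sres a σ)
    (hh₁ : holds φ σ₁) (hh₂ : holds φ σ₂) : σ₁ = σ₂ := by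
  obtain ⟨e1, e2⟩ := sres_parts hφ h₁ hh₁
  obtain ⟨e3, e4⟩ := sres_parts hφ h₂ hh₂
  exact St.ext' (e1.trans e3.symm) (e2.trans e4.symm)

lemma mem_BIN {S : Finset V} {ψ : Form V} :
    ψ ∈ BIN S ↔ ∃ P ⊆ S, ψ = (P, S \ P) := by
  simp only [BIN, Finset.mem_image, Finset.mem_powerset]
  constructor
  · rintro ⟨P, hP, rfl⟩; exact ⟨P, hP, rfl⟩
  · rintro ⟨P, hP, rfl⟩; exact ⟨P, hP, rfl⟩

/-- In a `WF` case plan list, distinct branches have mutually exclusive (hence distinct)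
guards, so a shared guard forces the branches to be equal. -/
lemma guard_inj {bs : List (Form V × Plan V)}
    (hc : ∀ b ∈ bs, Consistent b.1)
    (hp : bs.Pairwise (fun b b' => MutEx b.1 b'.1)) :
    ∀ b ∈ bs, ∀ b' ∈ bs, b.1 = b'.1 → b = b' := by
  intro b hb b' hb' he
  by_contra hne
  have hsym : Symmetric (fun (x y : Form V × Plan V) => MutEx x.1 y.1) :=
    fun x y h => Or.symm h
  have h := (haveI : Std.Symm (fun (x y : Form V × Plan V) => MutEx x.1 y.1) :=
    ⟨fun x y h => hsym h⟩; hp.forall hb hb' hne)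
  rw [he] at h
  rcases h with h | h <;> exact h (hc b' hb')

/-- In a sensed set, no fluent of `X` can be true in every member. -/
lemma sensed_not_allT {a : SAct V} {Δ' : Finset (St V)} {X : Finset V}
    (hs : SensedSet a Δ' X) {f : V} (hf : f ∈ X) (hall : ∀ m ∈ Δ', f ∈ m.T) : False := by
  obtain ⟨-, -, -, -, hpart, -⟩ := hs
  obtain ⟨m, ⟨hm, hT, hF⟩, -⟩ := hpart (X \ {f}) {f}
    (by simp [Finset.disjoint_left]) (by
      ext x; simp only [Finset.mem_union, Finset.mem_sdiff, Finset.mem_singleton]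
      constructor
      · rintro (⟨h, -⟩ | rfl) <;> [exact h; exact hf]
      · intro hx; by_cases hxf : x = f
        · exact Or.inr hxf
        · exact Or.inl ⟨hx, hxf⟩)
  have : f ∈ m.T ∩ X := Finset.mem_inter.2 ⟨hall m hm, hf⟩
  rw [hT] at this
  exact (Finset.mem_sdiff.1 this).2 (Finset.mem_singleton_self f)

/-- In a sensed set, no fluent of `X` can be false in every member. -/
lemma sensed_not_allF {a : SAct V} {Δ' : Finset (St V)} {X : Finset V}
    (hs : SensedSet a Δ' X) {f : V} (hf : f ∈ X) (hall : ∀ m ∈ Δ', f ∈ m.F) : False := by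
  obtain ⟨-, -, -, -, hpart, -⟩ := hs
  obtain ⟨m, ⟨hm, hT, hF⟩, -⟩ := hpart {f} (X \ {f})
    (by simp [Finset.disjoint_right]) (by
      ext x; simp only [Finset.mem_union, Finset.mem_sdiff, Finset.mem_singleton]
      constructor
      · rintro (rfl | ⟨h, -⟩) <;> [exact hf; exact h]
      · intro hx; by_cases hxf : x = f
        · exact Or.inl hxf
        · exact Or.inr ⟨hx, hxf⟩)
  have : f ∈ m.F ∩ X := Finset.mem_inter.2 ⟨hall m hm, hf⟩
  rw [hF] at this
  exact (Finset.mem_sdiff.1 this).2 (Finset.mem_singleton_self f)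

/-- Every member of a sensed-set family realizes exactly one partition of `X`. -/
lemma sensedSet_exact {a : SAct V} {Δ' : Finset (St V)} {X : Finset V}
    (hs : SensedSet a Δ' X) :
    ∀ m ∈ Δ', Disjoint (m.T ∩ X) (m.F ∩ X) ∧ (m.T ∩ X) ∪ (m.F ∩ X) = X := by
  obtain ⟨-, -, -, hcard, hpart, -⟩ := hs
  have key : ∀ P ∈ X.powerset, ∃ m, (m ∈ Δ' ∧ m.T ∩ X = P ∧ m.F ∩ X = X \ P) := by
    intro P hP
    have hPX := Finset.mem_powerset.1 hP
    exact (hpart P (X \ P) (Finset.disjoint_sdiff) (Finset.union_sdiff_of_subset hPX)).exists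
  classical
  set g : ∀ P ∈ X.powerset, St V := fun P hP => (key P hP).choose with hg
  have hgspec : ∀ P hP, (g P hP) ∈ Δ' ∧ (g P hP).T ∩ X = P ∧ (g P hP).F ∩ X = X \ P :=
    fun P hP => (key P hP).choose_spec
  have hsurj := Finset.surj_on_of_inj_on_of_card_le g (fun P hP => (hgspec P hP).1)
    (fun P₁ P₂ h₁ h₂ he => by
      have := (hgspec P₁ h₁).2.1
      rw [he, (hgspec P₂ h₂).2.1] at this
      exact this.symm)
    (by rw [hcard, Finset.card_powerset])
  intro m hm
  obtain ⟨P, hP, rfl⟩ := hsurj m hm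
  rw [(hgspec P hP).2.1, (hgspec P hP).2.2]
  exact ⟨Finset.disjoint_sdiff, Finset.union_sdiff_of_subset (Finset.mem_powerset.1 hP)⟩

lemma SaD_spec {a : SAct V} {Δ : Finset (St V)} (h : AppS a Δ) :
    ∃ e : St V → St V, (∀ δ ∈ Δ, pext δ (e δ)) ∧ Set.InjOn e ↑Δ ∧
      SensedSet a (Δ.image e) (SaD a Δ) := by
  obtain ⟨⟨e, he1, he2, ⟨X, hX⟩, -⟩, -⟩ := h
  have hex : ∃ X, ∃ e : St V → St V, (∀ δ ∈ Δ, pext δ (e δ)) ∧ Set.InjOn e ↑Δ ∧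
      SensedSet a (Δ.image e) X := ⟨X, e, he1, he2, hX⟩
  rw [SaD, dif_pos hex]
  exact hex.choose_spec

/-- Soundness of regression: if `Regress*(c,δ) = δ'' ≠ ⊥` and `σ ∈ ext(δ'')`, then
`⊥ ∉ Φ*(c,σ)` and `Φ*(c,σ) ⊆ ext(δ)` (for plans whose case plans are possibly
regressable). -/
lemma regress_sound {c : Plan V} {x y : Option (St V)} (h : RegStarR c x y) :
    AllCasesPR c → ∀ δ δ'' : St V, x = some δ → y = some δ'' →
    ∀ σ : St V, σ ∈ exts δ'' → Achieves c σ δ := by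
  induction h with
  | bot c => intro _ δ δ'' hx _ _ _; cases hx
  | empty δ0 =>
    intro _ δ δ'' hx hy σ hσ x' hx'
    cases hx; cases hy; cases hx'
    exact ⟨σ, hσ, rfl⟩
  | action a δ0 =>
    intro _ δ δ'' hx hy σ hσ x' hx'
    cases hx
    rw [RegressN] at hy
    by_cases happ : AppN a δ0
    swap
    · rw [if_neg happ] at hy; cases hy
    rw [if_pos happ] at hy
    injection hy with hy
    subst hy
    obtain ⟨hok, hTs, hFs⟩ := hσ
    have hPP : a.preP ⊆ σ.T := fun f hf => hTs (Finset.mem_union_right _ hf)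
    have hPN : a.preN ⊆ σ.F := fun f hf => hFs (Finset.mem_union_right _ hf)
    have hex : a.execIn σ := ⟨hPP, hPN⟩
    cases hx' with
    | action _ _ _ hmem =>
      refine ⟨a.res σ, ⟨res_OK hok, ?_, ?_⟩, PhiN_some hmem hex⟩
      · intro f hf
        by_cases hfa : f ∈ a.add
        · exact Finset.mem_union_right _ hfa
        · refine Finset.mem_union_left _ (Finset.mem_sdiff.2 ⟨?_, ?_⟩)
          · exact hTs (Finset.mem_union_left _ (Finset.mem_sdiff.2 ⟨hf, hfa⟩))
          · exact fun hd => (Finset.disjoint_left.1 happ.2.2.1) hd hf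
      · intro f hf
        by_cases hfd : f ∈ a.del
        · exact Finset.mem_union_right _ hfd
        · refine Finset.mem_union_left _ (Finset.mem_sdiff.2 ⟨?_, ?_⟩)
          · exact hFs (Finset.mem_union_left _ (Finset.mem_sdiff.2 ⟨hf, hfd⟩))
          · exact fun hd => (Finset.disjoint_left.1 happ.2.1) hd hf
  | caseBot a bs δ0 b hb hreg => intro _ δ δ'' _ hy; cases hy
  | caseRBot a bs δ0 b st hb hreg hnd => intro _ δ δ'' _ hy; cases hy
  | caseGo a bs δ0 r h1 h2 ih =>
    intro hacp δ δ'' hx hy σ hσ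
    cases hx
    set Δ : Finset (St V) := (bs.map (fun b => Rform b.1 (r b))).toFinset with hΔ
    rw [RegressS] at hy
    by_cases happ : AppS a Δ
    swap
    · rw [if_neg happ] at hy; cases hy
    rw [if_pos happ] at hy
    injection hy with hy
    subst hy
    obtain ⟨e', hpext, hinj, hss⟩ := SaD_spec happ
    set X : Finset V := SaD a Δ with hX
    obtain ⟨hok, hTs, hFs⟩ := hσ
    have hPP : a.preP ⊆ σ.T := fun f hf => hTs (Finset.mem_union_right _ hf)
    have hPN : a.preN ⊆ σ.F := fun f hf => hFs (Finset.mem_union_right _ hf)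
    have hexec : a.execIn σ := ⟨hPP, hPN⟩
    have hsupT : Δ.sup St.T \ X ⊆ σ.T :=
      fun f hf => hTs (Finset.mem_union_left _ hf)
    have hsupF : Δ.sup St.F \ X ⊆ σ.F :=
      fun f hf => hFs (Finset.mem_union_left _ hf)
    cases hacp with
    | pcase _ _ hpr hbr =>
    obtain ⟨⟨S₀, hS₀ne, hS₀sens, hspan⟩, hknow⟩ := hpr
    obtain ⟨φc, hφccons, hφcnot, hφcdisj, hχ⟩ := hspan
    have hmemΔ : ∀ m : St V, m ∈ Δ ↔ ∃ b ∈ bs, Rform b.1 (r b) = m := by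
      intro m
      rw [hΔ, List.mem_toFinset, List.mem_map]
    have hguard : ∀ b ∈ bs, ∃ P ⊆ S₀, b.1 = (φc.1 ∪ P, φc.2 ∪ (S₀ \ P)) := by
      intro b hb
      have hb1 : b.1 ∈ (bs.map Prod.fst).toFinset := by
        rw [List.mem_toFinset, List.mem_map]; exact ⟨b, hb, rfl⟩
      rw [hχ, Finset.mem_image] at hb1
      obtain ⟨ψ, hψ, hψeq⟩ := hb1
      obtain ⟨P, hP, rfl⟩ := mem_BIN.1 hψ
      exact ⟨P, hP, hψeq.symm⟩
    have hbranch_of : ∀ P ⊆ S₀, ∃ b ∈ bs, b.1 = (φc.1 ∪ P, φc.2 ∪ (S₀ \ P)) := by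
      intro P hP
      have : (φc.1 ∪ P, φc.2 ∪ (S₀ \ P)) ∈ (bs.map Prod.fst).toFinset := by
        rw [hχ, Finset.mem_image]
        exact ⟨(P, S₀ \ P), mem_BIN.2 ⟨P, hP, rfl⟩, rfl⟩
      rw [List.mem_toFinset, List.mem_map] at this
      obtain ⟨b, hb, hbe⟩ := this
      exact ⟨b, hb, hbe⟩
    have hTin : ∀ f, (∀ m ∈ Δ, f ∈ m.T) → f ∈ X → False := by
      intro f hall hfX
      refine sensed_not_allT hss hfX ?_
      intro m' hm'
      rw [Finset.mem_image] at hm'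
      obtain ⟨m, hm, rfl⟩ := hm'
      exact (hpext m hm).1 (hall m hm)
    have hFin : ∀ f, (∀ m ∈ Δ, f ∈ m.F) → f ∈ X → False := by
      intro f hall hfX
      refine sensed_not_allF hss hfX ?_
      intro m' hm'
      rw [Finset.mem_image] at hm'
      obtain ⟨m, hm, rfl⟩ := hm'
      exact (hpext m hm).2 (hall m hm)
    obtain ⟨b₀, hb₀, -⟩ := hbranch_of ∅ (Finset.empty_subset _)
    have hφc1σ : φc.1 ⊆ σ.T := by
      intro f hf
      have hall : ∀ m ∈ Δ, f ∈ m.T := by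
        intro m hm
        obtain ⟨b, hb, rfl⟩ := (hmemΔ m).1 hm
        obtain ⟨P, hP, hbg⟩ := hguard b hb
        have : f ∈ b.1.1 := by rw [hbg]; exact Finset.mem_union_left _ hf
        exact Finset.mem_union_right _ this
      by_cases hfX : f ∈ X
      · exact (hTin f hall hfX).elim
      · refine hsupT (Finset.mem_sdiff.2 ⟨?_, hfX⟩)
        exact Finset.mem_sup.2 ⟨_, (hmemΔ _).2 ⟨b₀, hb₀, rfl⟩,
          hall _ ((hmemΔ _).2 ⟨b₀, hb₀, rfl⟩)⟩
    have hφc2σ : φc.2 ⊆ σ.F := by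
      intro f hf
      have hall : ∀ m ∈ Δ, f ∈ m.F := by
        intro m hm
        obtain ⟨b, hb, rfl⟩ := (hmemΔ m).1 hm
        obtain ⟨P, hP, hbg⟩ := hguard b hb
        have : f ∈ b.1.2 := by rw [hbg]; exact Finset.mem_union_left _ hf
        exact Finset.mem_union_right _ this
      by_cases hfX : f ∈ X
      · exact (hFin f hall hfX).elim
      · refine hsupF (Finset.mem_sdiff.2 ⟨?_, hfX⟩)
        exact Finset.mem_sup.2 ⟨_, (hmemΔ _).2 ⟨b₀, hb₀, rfl⟩,
          hall _ ((hmemΔ _).2 ⟨b₀, hb₀, rfl⟩)⟩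
    intro x' hx'
    cases hx' with
    | caseBot _ _ _ hmem =>
      rcases hmem with ⟨hex', σ'', hσ'', heq⟩ | ⟨hne, -⟩
      · cases heq
      · exact absurd hexec hne
    | caseHit _ _ _ σ' φ p _ hPhiS hbmem hholds hrest =>
      obtain ⟨-, hsres⟩ := PhiS_some_elim hPhiS
      have hσ'ok : σ'.OK := hsres.1
      have hmem' : Rform (φ, p).1 (r (φ, p)) ∈ Δ := (hmemΔ _).2 ⟨(φ, p), hbmem, rfl⟩
      have hrT : (r (φ, p)).T ⊆ σ'.T := by
        intro f hf
        by_cases hfX : f ∈ X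
        · have hfs : f ∈ a.sens := hss.2.1 hfX
          rcases Finset.mem_union.1 (hknow (φ, p) hbmem hfs) with h | h
          · exact hholds.1 h
          · exact absurd hf (Finset.disjoint_left.1 (h2 (φ, p) hbmem).2 h)
        · refine hsres.2.1 (hsupT (Finset.mem_sdiff.2 ⟨?_, hfX⟩))
          exact Finset.mem_sup.2 ⟨_, hmem', Finset.mem_union_left _ hf⟩
      have hrF : (r (φ, p)).F ⊆ σ'.F := by
        intro f hf
        by_cases hfX : f ∈ X
        · have hfs : f ∈ a.sens := hss.2.1 hfX
          rcases Finset.mem_union.1 (hknow (φ, p) hbmem hfs) with h | h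
          · exact absurd hf (Finset.disjoint_left.1 (h2 (φ, p) hbmem).1 h)
          · exact hholds.2 h
        · refine hsres.2.2.1 (hsupF (Finset.mem_sdiff.2 ⟨?_, hfX⟩))
          exact Finset.mem_sup.2 ⟨_, hmem', Finset.mem_union_left _ hf⟩
      exact ih (φ, p) hbmem (hbr _ hbmem) δ0 (r (φ, p)) rfl rfl σ' ⟨hσ'ok, hrT, hrF⟩ x' hrest
    | caseMiss _ _ _ σ' hPhiS hnone =>
      exfalso
      obtain ⟨-, hsres⟩ := PhiS_some_elim hPhiS
      have hsens' : a.sens ⊆ σ'.T ∪ σ'.F := sres_sens_known hsres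
      obtain ⟨b, hb, hbeq⟩ := hbranch_of (S₀ ∩ σ'.T) Finset.inter_subset_left
      refine hnone b hb ?_
      rw [hbeq]
      constructor
      · exact Finset.union_subset (hφc1σ.trans hsres.2.1) Finset.inter_subset_right
      · refine Finset.union_subset (hφc2σ.trans hsres.2.2.1) ?_
        intro f hf
        obtain ⟨hf1, hf2⟩ := Finset.mem_sdiff.1 hf
        have : f ∉ σ'.T := fun hc => hf2 (Finset.mem_inter.2 ⟨hf1, hc⟩)
        rcases Finset.mem_union.1 (hsens' (hS₀sens hf1)) with h | h
        · exact absurd h this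
        · exact h
  | seq c₁ c₂ δ0 y0 x0 hr2 hr1 ih2 ih1 =>
    intro hacp δ δ'' hx hy σ hσ
    cases hx
    cases hacp with
    | seq hacp1 hacp2 =>
    match y0, hr1 with
    | none, hr1 => exact absurd (RegStar_none hr1) (by rw [hy]; simp)
    | some δ₁, hr1 =>
      have hach1 : Achieves c₁ σ δ₁ := ih1 hacp1 δ₁ δ'' rfl hy σ hσ
      intro x' hx'
      cases hx' with
      | seq _ _ _ y' _ hp1 hp2 =>
        obtain ⟨σ₁, hσ₁, rfl⟩ := hach1 y' hp1
        exact ih2 hacp2 δ0 δ₁ rfl rfl σ₁ hσ₁ x' hp2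

lemma transGen_lift {f : Plan V → Plan V} (hf : ∀ {p q : Plan V}, Edit p q → Edit (f p) (f q))
    {p q : Plan V} (h : Relation.TransGen Edit p q) : Relation.TransGen Edit (f p) (f q) := by
  induction h with
  | single h => exact .single (hf h)
  | tail _ h ih => exact .tail ih (hf h)

/-- The key step for non-sensing actions: executability, `a.res σ ∈ ext δ₁` and
non-extension give applicability of `a` in `δ₁` and `σ ∈ ext(Regress(a,δ₁))`. -/
lemma appN_of {a : NAct V} {σ δ₁ : St V} (hσ : σ.OK) (he : a.execIn σ)
    (hres : a.res σ ∈ exts δ₁) (hne : σ ∉ exts δ₁) :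
    RegressN a δ₁ = some ⟨δ₁.T \ a.add ∪ a.preP, δ₁.F \ a.del ∪ a.preN⟩ ∧
    σ ∈ exts ⟨δ₁.T \ a.add ∪ a.preP, δ₁.F \ a.del ∪ a.preN⟩ := by
  obtain ⟨hok', hT1, hF1⟩ := hres
  have hσd := Finset.disjoint_left.1 hσ
  have had := Finset.disjoint_left.1 a.hdisj
  have hTs : ∀ f ∈ δ₁.T, f ∉ a.add → f ∈ σ.T := by
    intro f hf hfa
    rcases Finset.mem_union.1 (hT1 hf) with h | h
    · exact (Finset.mem_sdiff.1 h).1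
    · exact absurd h hfa
  have hFs : ∀ f ∈ δ₁.F, f ∉ a.del → f ∈ σ.F := by
    intro f hf hfd
    rcases Finset.mem_union.1 (hF1 hf) with h | h
    · exact (Finset.mem_sdiff.1 h).1
    · exact absurd h hfd
  have hdaF : Disjoint a.add δ₁.F := by
    rw [Finset.disjoint_left]
    intro f hf hf'
    rcases Finset.mem_union.1 (hF1 hf') with h | h
    · exact (Finset.mem_sdiff.1 h).2 hf
    · exact had hf h
  have hddT : Disjoint a.del δ₁.T := by
    rw [Finset.disjoint_left]
    intro f hf hf'
    rcases Finset.mem_union.1 (hT1 hf') with h | h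
    · exact (Finset.mem_sdiff.1 h).2 hf
    · exact had h hf
  have hpPF : a.preP ∩ δ₁.F ⊆ a.del := by
    intro f hf
    obtain ⟨h1, h2⟩ := Finset.mem_inter.1 hf
    rcases Finset.mem_union.1 (hF1 h2) with h | h
    · exact absurd (Finset.mem_sdiff.1 h).1 (fun hc => hσd (he.1 h1) hc)
    · exact h
  have hpNT : a.preN ∩ δ₁.T ⊆ a.add := by
    intro f hf
    obtain ⟨h1, h2⟩ := Finset.mem_inter.1 hf
    rcases Finset.mem_union.1 (hT1 h2) with h | h
    · exact absurd (he.2 h1) (fun hc => hσd (Finset.mem_sdiff.1 h).1 hc)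
    · exact h
  have hnonempty : (a.add ∩ δ₁.T).Nonempty ∨ (a.del ∩ δ₁.F).Nonempty := by
    by_contra hcon
    push_neg at hcon
    simp only [Finset.not_nonempty_iff_eq_empty, Finset.eq_empty_iff_forall_notMem] at hcon
    obtain ⟨hc1, hc2⟩ := hcon
    refine hne ⟨hσ, ?_, ?_⟩
    · exact fun f hf => hTs f hf (fun hfa => hc1 f (Finset.mem_inter.2 ⟨hfa, hf⟩))
    · exact fun f hf => hFs f hf (fun hfd => hc2 f (Finset.mem_inter.2 ⟨hfd, hf⟩))
  have happ : AppN a δ₁ := ⟨hnonempty, hdaF, hddT, hpPF, hpNT⟩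
  refine ⟨by rw [RegressN, if_pos happ], ⟨hσ, ?_, ?_⟩⟩
  · refine Finset.union_subset ?_ he.1
    intro f hf
    obtain ⟨h1, h2⟩ := Finset.mem_sdiff.1 hf
    exact hTs f h1 h2
  · refine Finset.union_subset ?_ he.2
    intro f hf
    obtain ⟨h1, h2⟩ := Finset.mem_sdiff.1 hf
    exact hFs f h1 h2

lemma main_aux {c : Plan V} (hn : Normalized c) :
    ∀ σ δ : St V, σ.OK → δ.OK → c.WF → Regressable c σ δ →
    ∃ δ' : St V, RegStarR c (some δ) (some δ') ∧ σ ∈ exts δ' := by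
  induction hn with
  | empty =>
    intro σ δ hσ hδ hwf hr
    obtain ⟨σ', hσ', heq⟩ := hr.2.1 (some σ) (.empty σ)
    injection heq with heq
    subst heq
    exact ⟨δ, .empty δ, hσ'⟩
  | single a =>
    intro σ δ hσ hδ hwf hr
    obtain ⟨hacp, hach, hnred⟩ := hr
    have hexec : a.execIn σ := by
      by_contra hne
      obtain ⟨σ', -, heq⟩ := hach none (.action a σ none (PhiN_none hne))
      cases heq
    have hres : a.res σ ∈ exts δ := by
      obtain ⟨σ', hσ', heq⟩ := hach _ (.action a σ _ (Or.inl ⟨hexec, rfl⟩))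
      injection heq with heq
      rwa [heq]
    have hnotin : σ ∉ exts δ := by
      intro hin
      refine hnred ⟨hach, Plan.empty, .single (Edit.dropAct a), ?_⟩
      intro x hx
      cases hx
      exact ⟨σ, hin, rfl⟩
    obtain ⟨hreg, hmem⟩ := appN_of hσ hexec hres hnotin
    have h2 := RegStarR.action a δ
    rw [hreg] at h2
    exact ⟨_, h2, hmem⟩
  | @cons a c0 hnc ih =>
    intro σ δ hσ hδ hwf hr
    obtain ⟨hacp, hach, hnred⟩ := hr
    cases hwf with | seq hwf1 hwf2 =>
    cases hacp with | seq hacp1 hacp2 =>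
    have hexec : a.execIn σ := by
      by_contra hne
      obtain ⟨σ', -, heq⟩ := hach none
        (.seq _ _ σ none none (.action a σ none (PhiN_none hne)) (.bot c0))
      cases heq
    have hσ₁ok : (a.res σ).OK := res_OK hσ
    have hachc : Achieves c0 (a.res σ) δ := by
      intro x hx
      exact hach x (.seq _ _ σ (some (a.res σ)) x (.action a σ _ (Or.inl ⟨hexec, rfl⟩)) hx)
    have hnredc : ¬ Redundant c0 (a.res σ) δ := by
      rintro ⟨-, c', hsub, hach'⟩
      refine hnred ⟨hach, .seq (.action a) c',
        transGen_lift (fun h => Edit.seqR _ h) hsub, ?_⟩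
      intro x hx
      cases hx with | seq _ _ _ y _ hp1 hp2 =>
      cases hp1 with | action _ _ _ hmem =>
      have hy := PhiN_some hmem hexec
      subst hy
      exact hach' x hp2
    obtain ⟨δ₁, hregc, hσ₁δ₁⟩ := ih (a.res σ) δ hσ₁ok hδ hwf2 ⟨hacp2, hachc, hnredc⟩
    have hnotin : σ ∉ exts δ₁ := by
      intro hin
      have hachσ : Achieves c0 σ δ := regress_sound hregc hacp2 δ δ₁ rfl rfl σ hin
      refine hnred ⟨hach, .seq .empty c0, .single (Edit.seqL _ (Edit.dropAct a)), ?_⟩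
      intro x hx
      cases hx with | seq _ _ _ y _ hp1 hp2 =>
      cases hp1
      exact hachσ x hp2
    obtain ⟨hreg, hmem⟩ := appN_of hσ hexec hσ₁δ₁ hnotin
    have h2 := RegStarR.action a δ₁
    rw [hreg] at h2
    exact ⟨_, .seq (.action a) _ δ (some δ₁) _ hregc h2, hmem⟩
  | pcase a bs hns ih =>
    intro σ δ hσ hδ hwf hr
    obtain ⟨hacp, hach, hnred⟩ := hr
    cases hwf with | pcase _ _ hcons hmutex hwfb =>
    cases hacp with | pcase _ _ hpr hbr =>
    obtain ⟨⟨S₀, hS₀ne, hS₀sens, hspan⟩, hknow⟩ := hpr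
    obtain ⟨φc, hφccons, hφcnot, hφcdisj, hχ⟩ := hspan
    have hexec : a.execIn σ := by
      by_contra hne
      obtain ⟨σ', -, heq⟩ := hach none (.caseBot a bs σ (PhiS_none hne))
      cases heq
    -- guards are exactly the binary extensions of `φc` over `S₀`
    have hguard : ∀ b ∈ bs, ∃ P ⊆ S₀, b.1 = (φc.1 ∪ P, φc.2 ∪ (S₀ \ P)) := by
      intro b hb
      have hb1 : b.1 ∈ (bs.map Prod.fst).toFinset := by
        rw [List.mem_toFinset, List.mem_map]; exact ⟨b, hb, rfl⟩
      rw [hχ, Finset.mem_image] at hb1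
      obtain ⟨ψ, hψ, hψeq⟩ := hb1
      obtain ⟨P, hP, rfl⟩ := mem_BIN.1 hψ
      exact ⟨P, hP, hψeq.symm⟩
    have hbranch_of : ∀ P ⊆ S₀, ∃ b ∈ bs, b.1 = (φc.1 ∪ P, φc.2 ∪ (S₀ \ P)) := by
      intro P hP
      have : (φc.1 ∪ P, φc.2 ∪ (S₀ \ P)) ∈ (bs.map Prod.fst).toFinset := by
        rw [hχ, Finset.mem_image]
        exact ⟨(P, S₀ \ P), mem_BIN.2 ⟨P, hP, rfl⟩, rfl⟩
      rw [List.mem_toFinset, List.mem_map] at this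
      obtain ⟨b, hb, hbe⟩ := this
      exact ⟨b, hb, hbe⟩
    -- every branch is live (else we could drop it)
    have hlive : ∀ b ∈ bs, ∃ σ', σ' ∈ sres a σ ∧ holds b.1 σ' := by
      intro b hb
      by_contra hdead
      push_neg at hdead
      obtain ⟨l₁, l₂, hbs⟩ := List.append_of_mem hb
      refine hnred ⟨hach, .pcase a (l₁ ++ l₂),
        (by rw [hbs]; exact .single (Edit.dropBranch a b l₁ l₂)), ?_⟩
      intro x hx
      cases hx with
      | caseBot _ _ _ hmem =>
        rcases hmem with ⟨-, σ'', -, heq⟩ | ⟨hne, -⟩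
        · cases heq
        · exact absurd hexec hne
      | caseHit _ _ _ σ' φ p _ hPhiS hbmem hholds hrest =>
        refine hach x (.caseHit a bs σ σ' φ p x hPhiS ?_ hholds hrest)
        rw [hbs]
        rcases List.mem_append.1 hbmem with h | h
        · exact List.mem_append.2 (Or.inl h)
        · exact List.mem_append.2 (Or.inr (List.mem_cons_of_mem _ h))
      | caseMiss _ _ _ σ' hPhiS hnone =>
        obtain ⟨-, hsres⟩ := PhiS_some_elim hPhiS
        have hmiss : ∀ b' ∈ bs, ¬ holds b'.1 σ' := by
          intro b' hb'
          rw [hbs] at hb'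
          rcases List.mem_append.1 hb' with h | h
          · exact hnone b' (List.mem_append.2 (Or.inl h))
          · rcases List.mem_cons.1 h with rfl | h
            · exact hdead σ' hsres
            · exact hnone b' (List.mem_append.2 (Or.inr h))
        obtain ⟨σ'', -, heq⟩ := hach none (.caseMiss a bs σ σ' hPhiS hmiss)
        cases heq
    have hlive' : ∀ b : Form V × Plan V, ∃ s : St V,
        b ∈ bs → s ∈ sres a σ ∧ holds b.1 s := by
      intro b
      by_cases hb : b ∈ bs
      · obtain ⟨s, h1, h2⟩ := hlive b hb; exact ⟨s, fun _ => ⟨h1, h2⟩⟩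
      · exact ⟨σ, fun h => absurd h hb⟩
    choose σb hσb using hlive'
    -- `S₀` is unknown in σ
    have hS₀unk : ∀ f ∈ S₀, f ∉ σ.T ∧ f ∉ σ.F := by
      intro f hf
      constructor
      · intro hc
        obtain ⟨b, hb, hbeq⟩ := hbranch_of ∅ (Finset.empty_subset _)
        have h1 : f ∈ (σb b).F := (hσb b hb).2.2 (by
          rw [hbeq]
          exact Finset.mem_union_right _ (Finset.mem_sdiff.2 ⟨hf, Finset.notMem_empty f⟩))
        have h2 : f ∈ (σb b).T := (hσb b hb).1.2.1 hc
        exact (Finset.disjoint_left.1 (hσb b hb).1.1) h2 h1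
      · intro hc
        obtain ⟨b, hb, hbeq⟩ := hbranch_of S₀ subset_rfl
        have h1 : f ∈ (σb b).T := (hσb b hb).2.1 (by
          rw [hbeq]; exact Finset.mem_union_right _ hf)
        have h2 : f ∈ (σb b).F := (hσb b hb).1.2.2.1 hc
        exact (Finset.disjoint_left.1 (hσb b hb).1.1) h1 h2
    -- sensed fluents of the common part `φc` are already known in σ
    have hφc1 : φc.1 ∩ a.sens ⊆ σ.T := by
      intro f hf
      obtain ⟨hf1, hf2⟩ := Finset.mem_inter.1 hf
      by_contra hfT
      by_cases hfF : f ∈ σ.F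
      · obtain ⟨b, hb, hbeq⟩ := hbranch_of ∅ (Finset.empty_subset _)
        have h1 : f ∈ (σb b).T := (hσb b hb).2.1 (by
          rw [hbeq]; exact Finset.mem_union_left _ hf1)
        have h2 : f ∈ (σb b).F := (hσb b hb).1.2.2.1 hfF
        exact (Finset.disjoint_left.1 (hσb b hb).1.1) h1 h2
      · have hfun : f ∈ a.sens \ (σ.T ∪ σ.F) := Finset.mem_sdiff.2 ⟨hf2, by
          rw [Finset.mem_union]; rintro (h | h) <;> [exact hfT h; exact hfF h]⟩
        have hmem'' := mem_sres_of (a := a) hσ ∅ (Finset.empty_subset _)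
        set σ'' : St V := St.mk (σ.T ∪ ∅) (σ.F ∪ ((a.sens \ (σ.T ∪ σ.F)) \ ∅)) with hσ''
        have hfσ'' : f ∈ σ''.F := by
          rw [hσ'']
          exact Finset.mem_union_right _ (Finset.mem_sdiff.2 ⟨hfun, Finset.notMem_empty f⟩)
        have hmiss : ∀ b' ∈ bs, ¬ holds b'.1 σ'' := by
          intro b' hb' hhold
          obtain ⟨P, hP, hbeq⟩ := hguard b' hb'
          have h1 : f ∈ σ''.T := hhold.1 (by
            rw [hbeq]; exact Finset.mem_union_left _ hf1)
          exact (Finset.disjoint_left.1 hmem''.1) h1 hfσ''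
        obtain ⟨σ''', -, heq⟩ := hach none
          (.caseMiss a bs σ σ'' (PhiS_some_intro hexec hmem'') hmiss)
        cases heq
    have hφc2 : φc.2 ∩ a.sens ⊆ σ.F := by
      intro f hf
      obtain ⟨hf1, hf2⟩ := Finset.mem_inter.1 hf
      by_contra hfF
      by_cases hfT : f ∈ σ.T
      · obtain ⟨b, hb, hbeq⟩ := hbranch_of ∅ (Finset.empty_subset _)
        have h1 : f ∈ (σb b).F := (hσb b hb).2.2 (by
          rw [hbeq]; exact Finset.mem_union_left _ hf1)
        have h2 : f ∈ (σb b).T := (hσb b hb).1.2.1 hfT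
        exact (Finset.disjoint_left.1 (hσb b hb).1.1) h2 h1
      · have hfun : f ∈ a.sens \ (σ.T ∪ σ.F) := Finset.mem_sdiff.2 ⟨hf2, by
          rw [Finset.mem_union]; rintro (h | h) <;> [exact hfT h; exact hfF h]⟩
        have hmem'' := mem_sres_of (a := a) hσ (a.sens \ (σ.T ∪ σ.F)) subset_rfl
        set σ'' : St V := St.mk (σ.T ∪ (a.sens \ (σ.T ∪ σ.F)))
          (σ.F ∪ ((a.sens \ (σ.T ∪ σ.F)) \ (a.sens \ (σ.T ∪ σ.F)))) with hσ''
        have hfσ'' : f ∈ σ''.T := by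
          rw [hσ'']; exact Finset.mem_union_right _ hfun
        have hmiss : ∀ b' ∈ bs, ¬ holds b'.1 σ'' := by
          intro b' hb' hhold
          obtain ⟨P, hP, hbeq⟩ := hguard b' hb'
          have h1 : f ∈ σ''.F := hhold.2 (by
            rw [hbeq]; exact Finset.mem_union_left _ hf1)
          exact (Finset.disjoint_left.1 hmem''.1) hfσ'' h1
        obtain ⟨σ''', -, heq⟩ := hach none
          (.caseMiss a bs σ σ'' (PhiS_some_intro hexec hmem'') hmiss)
        cases heq
    -- choose the `ψ`-part of each guard
    have hguard' : ∀ b : Form V × Plan V, ∃ P : Finset V,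
        b ∈ bs → (P ⊆ S₀ ∧ b.1 = (φc.1 ∪ P, φc.2 ∪ (S₀ \ P))) := by
      intro b
      by_cases hb : b ∈ bs
      · obtain ⟨P, h1, h2⟩ := hguard b hb; exact ⟨P, fun _ => ⟨h1, h2⟩⟩
      · exact ⟨∅, fun h => absurd h hb⟩
    choose Pb hPb using hguard'
    have hPbeq : ∀ b ∈ bs, ∀ P ⊆ S₀, b.1 = (φc.1 ∪ P, φc.2 ∪ (S₀ \ P)) → Pb b = P := by
      intro b hb P hP hbeq
      obtain ⟨hPb1, hPb2⟩ := hPb b hb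
      have h1 : φc.1 ∪ Pb b = φc.1 ∪ P := by
        have := hPb2.symm.trans hbeq
        exact congrArg Prod.fst this
      have hd := Finset.disjoint_left.1 hφcdisj
      ext f
      constructor
      · intro hf
        have : f ∈ φc.1 ∪ P := by rw [← h1]; exact Finset.mem_union_right _ hf
        rcases Finset.mem_union.1 this with h | h
        · exact absurd (Finset.mem_union_left _ h : f ∈ φc.1 ∪ φc.2)
            (hd (hPb1 hf))
        · exact h
      · intro hf
        have : f ∈ φc.1 ∪ Pb b := by rw [h1]; exact Finset.mem_union_right _ hf
        rcases Finset.mem_union.1 this with h | h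
        · exact absurd (Finset.mem_union_left _ h : f ∈ φc.1 ∪ φc.2) (hd (hP hf))
        · exact h
    -- the `S₀`-parts of the chosen a-states
    have hσbTS : ∀ b ∈ bs, (σb b).T ∩ S₀ = Pb b ∧ (σb b).F ∩ S₀ = S₀ \ Pb b := by
      intro b hb
      obtain ⟨hPb1, hPb2⟩ := hPb b hb
      obtain ⟨hpT, hpF⟩ := sres_parts (hknow b hb) (hσb b hb).1 (hσb b hb).2
      have hd := Finset.disjoint_left.1 hφcdisj
      constructor
      · ext f
        simp only [Finset.mem_inter]
        constructor
        · rintro ⟨hf1, hf2⟩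
          rw [hpT] at hf1
          rcases Finset.mem_union.1 hf1 with h | h
          · exact absurd h (hS₀unk f hf2).1
          · have := (Finset.mem_inter.1 h).2
            rw [hPb2] at this
            rcases Finset.mem_union.1 this with h' | h'
            · exact absurd (Finset.mem_union_left _ h') (hd hf2)
            · exact h'
        · intro hf
          refine ⟨(hσb b hb).2.1 ?_, hPb1 hf⟩
          rw [hPb2]
          exact Finset.mem_union_right _ hf
      · ext f
        simp only [Finset.mem_inter]
        constructor
        · rintro ⟨hf1, hf2⟩
          rw [hpF] at hf1
          rcases Finset.mem_union.1 hf1 with h | h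
          · exact absurd h (hS₀unk f hf2).2
          · have := (Finset.mem_inter.1 h).2
            rw [hPb2] at this
            rcases Finset.mem_union.1 this with h' | h'
            · exact absurd (Finset.mem_union_right _ h') (hd hf2)
            · exact h'
        · intro hf
          refine ⟨(hσb b hb).2.2 ?_, (Finset.mem_sdiff.1 hf).1⟩
          rw [hPb2]
          exact Finset.mem_union_right _ hf
    -- each branch is regressable, apply the induction hypothesis
    have hbranchreg : ∀ b ∈ bs, ∃ d : St V,
        RegStarR b.2 (some δ) (some d) ∧ σb b ∈ exts d := by
      intro b hb
      apply ih b hb (σb b) δ (hσb b hb).1.1 hδ (hwfb b hb)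
      refine ⟨hbr b hb, ?_, ?_⟩
      · intro x hx
        exact hach x (.caseHit a bs σ (σb b) b.1 b.2 x
          (PhiS_some_intro hexec (hσb b hb).1) hb (hσb b hb).2 hx)
      · rintro ⟨-, p', hsub, hach'⟩
        obtain ⟨l₁, l₂, hbs⟩ := List.append_of_mem hb
        refine hnred ⟨hach, .pcase a (l₁ ++ (b.1, p') :: l₂),
          (by rw [hbs]
              exact transGen_lift (fun h => Edit.inBranch a b.1 _ _ l₁ l₂ h) hsub), ?_⟩
        intro x hx
        cases hx with
        | caseBot _ _ _ hmem =>
          rcases hmem with ⟨-, σ'', -, heq⟩ | ⟨hne, -⟩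
          · cases heq
          · exact absurd hexec hne
        | caseHit _ _ _ σ' φ p _ hPhiS hbmem hholds hrest =>
          rcases List.mem_append.1 hbmem with h | h
          · exact hach x (.caseHit a bs σ σ' φ p x hPhiS
              (by rw [hbs]; exact List.mem_append.2 (Or.inl h)) hholds hrest)
          · rcases List.mem_cons.1 h with heqb | h
            · have hφeq : φ = b.1 := congrArg Prod.fst heqb
              have hpeq : p = p' := congrArg Prod.snd heqb
              subst hφeq hpeq
              obtain ⟨-, hsres'⟩ := PhiS_some_elim hPhiS
              have hσ'eq : σ' = σb b :=
                sres_unique (hknow b hb) hsres' (hσb b hb).1 hholds (hσb b hb).2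
              rw [hσ'eq] at hrest
              exact hach' x hrest
            · exact hach x (.caseHit a bs σ σ' φ p x hPhiS
                (by rw [hbs]
                    exact List.mem_append.2 (Or.inr (List.mem_cons_of_mem _ h)))
                hholds hrest)
        | caseMiss _ _ _ σ' hPhiS hnone =>
          have hmiss : ∀ b' ∈ bs, ¬ holds b'.1 σ' := by
            intro b' hb'
            rw [hbs] at hb'
            rcases List.mem_append.1 hb' with h | h
            · exact hnone b' (List.mem_append.2 (Or.inl h))
            · rcases List.mem_cons.1 h with rfl | h
              · exact hnone (b'.1, p') (List.mem_append.2
                  (Or.inr List.mem_cons_self))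
              · exact hnone b' (List.mem_append.2 (Or.inr (List.mem_cons_of_mem _ h)))
          obtain ⟨σ''', -, heq⟩ := hach none (.caseMiss a bs σ σ' hPhiS hmiss)
          cases heq
    have hbranchreg' : ∀ b : Form V × Plan V, ∃ d : St V,
        b ∈ bs → (RegStarR b.2 (some δ) (some d) ∧ σb b ∈ exts d) := by
      intro b
      by_cases hb : b ∈ bs
      · obtain ⟨d, h1, h2⟩ := hbranchreg b hb; exact ⟨d, fun _ => ⟨h1, h2⟩⟩
      · exact ⟨σ, fun h => absurd h hb⟩
    choose rb hrb using hbranchreg'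
    have hdisj2 : ∀ b ∈ bs, Disjoint b.1.1 (rb b).F ∧ Disjoint b.1.2 (rb b).T := by
      intro b hb
      have hh := (hσb b hb).2
      have he := (hrb b hb).2
      have hok := (hσb b hb).1.1
      constructor
      · rw [Finset.disjoint_left]
        intro f hf hf'
        exact (Finset.disjoint_left.1 hok) (hh.1 hf) (he.2.2 hf')
      · rw [Finset.disjoint_left]
        intro f hf hf'
        exact (Finset.disjoint_left.1 hok) (he.2.1 hf') (hh.2 hf)
    have hregstep := RegStarR.caseGo a bs δ rb (fun b hb => (hrb b hb).1) hdisj2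
    set Δ : Finset (St V) := (bs.map (fun b => Rform b.1 (rb b))).toFinset with hΔ
    have hmemΔ : ∀ m : St V, m ∈ Δ ↔ ∃ b ∈ bs, Rform b.1 (rb b) = m := by
      intro m
      rw [hΔ, List.mem_toFinset, List.mem_map]
    have hRT : ∀ b ∈ bs, (Rform b.1 (rb b)).T ⊆ (σb b).T := by
      intro b hb
      exact Finset.union_subset (hrb b hb).2.2.1 (hσb b hb).2.1
    have hRF : ∀ b ∈ bs, (Rform b.1 (rb b)).F ⊆ (σb b).F := by
      intro b hb
      exact Finset.union_subset (hrb b hb).2.2.2 (hσb b hb).2.2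
    have hRTS : ∀ b ∈ bs, (Rform b.1 (rb b)).T ∩ S₀ = Pb b := by
      intro b hb
      apply Finset.Subset.antisymm
      · rw [← (hσbTS b hb).1]
        exact Finset.inter_subset_inter_right (hRT b hb)
      · intro f hf
        refine Finset.mem_inter.2 ⟨?_, (hPb b hb).1 hf⟩
        refine Finset.mem_union_right _ ?_
        rw [(hPb b hb).2]
        exact Finset.mem_union_right _ hf
    have hRFS : ∀ b ∈ bs, (Rform b.1 (rb b)).F ∩ S₀ = S₀ \ Pb b := by
      intro b hb
      apply Finset.Subset.antisymm
      · rw [← (hσbTS b hb).2]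
        exact Finset.inter_subset_inter_right (hRF b hb)
      · intro f hf
        refine Finset.mem_inter.2 ⟨?_, (Finset.mem_sdiff.1 hf).1⟩
        refine Finset.mem_union_right _ ?_
        rw [(hPb b hb).2]
        exact Finset.mem_union_right _ hf
    have hUT : ∀ f ∈ Δ.sup St.T, f ∉ S₀ → f ∈ σ.T := by
      intro f hf hfS₀
      obtain ⟨m, hm, hfm⟩ := Finset.mem_sup.1 hf
      obtain ⟨b, hb, rfl⟩ := (hmemΔ m).1 hm
      have h1 : f ∈ (σb b).T := hRT b hb hfm
      obtain ⟨hpT, -⟩ := sres_parts (hknow b hb) (hσb b hb).1 (hσb b hb).2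
      rw [hpT] at h1
      rcases Finset.mem_union.1 h1 with h | h
      · exact h
      · obtain ⟨h2, h3⟩ := Finset.mem_inter.1 h
        rw [(hPb b hb).2] at h3
        rcases Finset.mem_union.1 h3 with h' | h'
        · exact hφc1 (Finset.mem_inter.2 ⟨h', (Finset.mem_sdiff.1 h2).1⟩)
        · exact absurd ((hPb b hb).1 h') hfS₀
    have hUF : ∀ f ∈ Δ.sup St.F, f ∉ S₀ → f ∈ σ.F := by
      intro f hf hfS₀
      obtain ⟨m, hm, hfm⟩ := Finset.mem_sup.1 hf
      obtain ⟨b, hb, rfl⟩ := (hmemΔ m).1 hm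
      have h1 : f ∈ (σb b).F := hRF b hb hfm
      obtain ⟨-, hpF⟩ := sres_parts (hknow b hb) (hσb b hb).1 (hσb b hb).2
      rw [hpF] at h1
      rcases Finset.mem_union.1 h1 with h | h
      · exact h
      · obtain ⟨h2, h3⟩ := Finset.mem_inter.1 h
        rw [(hPb b hb).2] at h3
        rcases Finset.mem_union.1 h3 with h' | h'
        · exact hφc2 (Finset.mem_inter.2 ⟨h', (Finset.mem_sdiff.1 h2).1⟩)
        · exact absurd (Finset.mem_sdiff.1 h').1 hfS₀
    -- the partial-extension function witnessing strong applicability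
    set UT : Finset V := Δ.sup St.T \ S₀ with hUTdef
    set UF : Finset V := Δ.sup St.F \ S₀ with hUFdef
    have hUTS₀ : ∀ f ∈ UT, f ∉ S₀ := fun f hf => (Finset.mem_sdiff.1 hf).2
    have hUFS₀ : ∀ f ∈ UF, f ∉ S₀ := fun f hf => (Finset.mem_sdiff.1 hf).2
    set e : St V → St V := fun s => St.mk ((s.T ∩ S₀) ∪ UT) ((s.F ∩ S₀) ∪ UF) with hedef
    have heT : ∀ s : St V, (e s).T ∩ S₀ = s.T ∩ S₀ := by
      intro s
      ext f
      simp only [hedef, Finset.mem_inter, Finset.mem_union]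
      constructor
      · rintro ⟨h1 | h1, h2⟩
        · exact ⟨h1.1, h2⟩
        · exact absurd h2 (hUTS₀ f h1)
      · rintro ⟨h1, h2⟩
        exact ⟨Or.inl ⟨h1, h2⟩, h2⟩
    have heF : ∀ s : St V, (e s).F ∩ S₀ = s.F ∩ S₀ := by
      intro s
      ext f
      simp only [hedef, Finset.mem_inter, Finset.mem_union]
      constructor
      · rintro ⟨h1 | h1, h2⟩
        · exact ⟨h1.1, h2⟩
        · exact absurd h2 (hUFS₀ f h1)
      · rintro ⟨h1, h2⟩
        exact ⟨Or.inl ⟨h1, h2⟩, h2⟩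
    have hpexte : ∀ m ∈ Δ, pext m (e m) := by
      intro m hm
      constructor
      · intro f hf
        by_cases hfS₀ : f ∈ S₀
        · exact Finset.mem_union_left _ (Finset.mem_inter.2 ⟨hf, hfS₀⟩)
        · exact Finset.mem_union_right _ (Finset.mem_sdiff.2
            ⟨Finset.mem_sup.2 ⟨m, hm, hf⟩, hfS₀⟩)
      · intro f hf
        by_cases hfS₀ : f ∈ S₀
        · exact Finset.mem_union_left _ (Finset.mem_inter.2 ⟨hf, hfS₀⟩)
        · exact Finset.mem_union_right _ (Finset.mem_sdiff.2
            ⟨Finset.mem_sup.2 ⟨m, hm, hf⟩, hfS₀⟩)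
    have hinje : Set.InjOn e ↑Δ := by
      intro s hs t ht heq
      obtain ⟨b, hb, rfl⟩ := (hmemΔ s).1 hs
      obtain ⟨b', hb', rfl⟩ := (hmemΔ t).1 ht
      have h1 : Pb b = Pb b' := by
        calc Pb b = (Rform b.1 (rb b)).T ∩ S₀ := (hRTS b hb).symm
          _ = (e (Rform b.1 (rb b))).T ∩ S₀ := (heT _).symm
          _ = (e (Rform b'.1 (rb b'))).T ∩ S₀ := by rw [heq]
          _ = (Rform b'.1 (rb b')).T ∩ S₀ := heT _
          _ = Pb b' := hRTS b' hb' 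
      have h2 : b.1 = b'.1 := by
        rw [(hPb b hb).2, (hPb b' hb').2, h1]
      rw [guard_inj hcons hmutex b hb b' hb' h2]
    have himg : Δ.image e =
        S₀.powerset.image (fun P => St.mk (P ∪ UT) ((S₀ \ P) ∪ UF)) := by
      ext m'
      simp only [Finset.mem_image, Finset.mem_powerset]
      constructor
      · rintro ⟨m, hm, rfl⟩
        obtain ⟨b, hb, rfl⟩ := (hmemΔ m).1 hm
        refine ⟨Pb b, (hPb b hb).1, ?_⟩
        rw [hedef]
        simp only
        rw [hRTS b hb, hRFS b hb]
      · rintro ⟨P, hP, rfl⟩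
        obtain ⟨b, hb, hbeq⟩ := hbranch_of P hP
        have hPbP : Pb b = P := hPbeq b hb P hP hbeq
        refine ⟨Rform b.1 (rb b), (hmemΔ _).2 ⟨b, hb, rfl⟩, ?_⟩
        rw [hedef]
        simp only
        rw [hRTS b hb, hRFS b hb, hPbP]
    have hcardimg : (Δ.image e).card = 2 ^ S₀.card := by
      rw [himg, Finset.card_image_of_injOn, Finset.card_powerset]
      intro P hP Q hQ heq
      have h1 := congrArg St.T heq
      simp only at h1
      have : (P ∪ UT) ∩ S₀ = (Q ∪ UT) ∩ S₀ := by rw [h1]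
      rw [Finset.union_inter_distrib_right, Finset.union_inter_distrib_right] at this
      rw [Finset.inter_eq_left.2 (Finset.mem_powerset.1 hP),
        Finset.inter_eq_left.2 (Finset.mem_powerset.1 hQ)] at this
      have hUTe : UT ∩ S₀ = ∅ := by
        rw [Finset.eq_empty_iff_forall_notMem]
        intro f hf
        exact hUTS₀ f (Finset.mem_inter.1 hf).1 (Finset.mem_inter.1 hf).2
      rw [hUTe, Finset.union_empty, Finset.union_empty] at this
      exact this
    have hknownm : ∀ m' ∈ Δ.image e, a.sens ⊆ m'.T ∪ m'.F := by
      intro m' hm'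
      obtain ⟨m, hm, rfl⟩ := Finset.mem_image.1 hm'
      obtain ⟨b, hb, rfl⟩ := (hmemΔ m).1 hm
      intro f hf
      have h1 : f ∈ (Rform b.1 (rb b)).T ∪ (Rform b.1 (rb b)).F := by
        rcases Finset.mem_union.1 (hknow b hb hf) with h | h
        · exact Finset.mem_union_left _ (Finset.mem_union_right _ h)
        · exact Finset.mem_union_right _ (Finset.mem_union_right _ h)
      by_cases hfS₀ : f ∈ S₀
      · rcases Finset.mem_union.1 h1 with h | h
        · exact Finset.mem_union_left _
            (Finset.mem_union_left _ (Finset.mem_inter.2 ⟨h, hfS₀⟩))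
        · exact Finset.mem_union_right _
            (Finset.mem_union_left _ (Finset.mem_inter.2 ⟨h, hfS₀⟩))
      · rcases Finset.mem_union.1 h1 with h | h
        · exact Finset.mem_union_left _ (Finset.mem_union_right _
            (Finset.mem_sdiff.2 ⟨Finset.mem_sup.2 ⟨_, hm, h⟩, hfS₀⟩))
        · exact Finset.mem_union_right _ (Finset.mem_union_right _
            (Finset.mem_sdiff.2 ⟨Finset.mem_sup.2 ⟨_, hm, h⟩, hfS₀⟩))
    have hUTe : UT ∩ S₀ = ∅ := by
      rw [Finset.eq_empty_iff_forall_notMem]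
      intro f hf
      exact hUTS₀ f (Finset.mem_inter.1 hf).1 (Finset.mem_inter.1 hf).2
    have hUFe : UF ∩ S₀ = ∅ := by
      rw [Finset.eq_empty_iff_forall_notMem]
      intro f hf
      exact hUFS₀ f (Finset.mem_inter.1 hf).1 (Finset.mem_inter.1 hf).2
    have hTcomp : ∀ P ⊆ S₀, (P ∪ UT) ∩ S₀ = P ∧ ((S₀ \ P) ∪ UF) ∩ S₀ = S₀ \ P := by
      intro P hP
      constructor
      · rw [Finset.union_inter_distrib_right, hUTe, Finset.union_empty,
          Finset.inter_eq_left.2 hP]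
      · rw [Finset.union_inter_distrib_right, hUFe, Finset.union_empty,
          Finset.inter_eq_left.2 Finset.sdiff_subset]
    have hpartition : ∀ P Q : Finset V, Disjoint P Q → P ∪ Q = S₀ →
        ∃! m', m' ∈ Δ.image e ∧ m'.T ∩ S₀ = P ∧ m'.F ∩ S₀ = Q := by
      intro P Q hdPQ hPQ
      have hPS₀ : P ⊆ S₀ := by rw [← hPQ]; exact Finset.subset_union_left
      have hQeq : Q = S₀ \ P := by
        ext f
        rw [Finset.mem_sdiff, ← hPQ, Finset.mem_union]
        constructor
        · intro hf
          exact ⟨Or.inr hf, fun hc => (Finset.disjoint_left.1 hdPQ) hc hf⟩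
        · rintro ⟨h | h, h2⟩
          · exact absurd h h2
          · exact h
      refine ⟨St.mk (P ∪ UT) ((S₀ \ P) ∪ UF), ⟨?_, ?_, ?_⟩, ?_⟩
      · rw [himg, Finset.mem_image]
        exact ⟨P, Finset.mem_powerset.2 hPS₀, rfl⟩
      · exact (hTcomp P hPS₀).1
      · rw [hQeq]; exact (hTcomp P hPS₀).2
      · rintro m'' ⟨hmem'', hT'', hF''⟩
        rw [himg, Finset.mem_image] at hmem''
        obtain ⟨P', hP', rfl⟩ := hmem''
        have : P' = P := by
          rw [← hT'']
          exact ((hTcomp P' (Finset.mem_powerset.1 hP')).1).symm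
        rw [this]
    have hcommon : ∀ m' ∈ Δ.image e, ∀ m'' ∈ Δ.image e, m' ≠ m'' →
        m'.T \ S₀ = m''.T \ S₀ ∧ m'.F \ S₀ = m''.F \ S₀ := by
      have hform : ∀ m' ∈ Δ.image e, m'.T \ S₀ = UT ∧ m'.F \ S₀ = UF := by
        intro m' hm'
        rw [himg, Finset.mem_image] at hm'
        obtain ⟨P, hP, rfl⟩ := hm'
        constructor
        · ext f
          simp only [Finset.mem_sdiff, Finset.mem_union]
          constructor
          · rintro ⟨h1 | h1, h2⟩
            · exact absurd (Finset.mem_powerset.1 hP h1) h2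
            · exact h1
          · intro hf
            exact ⟨Or.inr hf, hUTS₀ f hf⟩
        · ext f
          simp only [Finset.mem_sdiff, Finset.mem_union]
          constructor
          · rintro ⟨h1 | h1, h2⟩
            · exact absurd h1.1 h2
            · exact h1
          · intro hf
            exact ⟨Or.inr hf, hUFS₀ f hf⟩
      intro m' hm' m'' hm'' _
      rw [(hform m' hm').1, (hform m' hm').2, (hform m'' hm'').1, (hform m'' hm'').2]
      exact ⟨rfl, rfl⟩
    have hsensedset : SensedSet a (Δ.image e) S₀ :=
      ⟨hS₀ne, hS₀sens, hknownm, hcardimg, hpartition, hcommon⟩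
    have hstrongpre : ∀ m' ∈ Δ.image e, Disjoint a.preP m'.F ∧ Disjoint a.preN m'.T := by
      intro m' hm'
      rw [himg, Finset.mem_image] at hm'
      obtain ⟨P, hP, rfl⟩ := hm'
      constructor
      · rw [Finset.disjoint_left]
        intro f hf hf'
        rcases Finset.mem_union.1 hf' with h | h
        · exact (hS₀unk f (Finset.mem_sdiff.1 h).1).1 (hexec.1 hf)
        · exact (Finset.disjoint_left.1 hσ) (hexec.1 hf)
            (hUF f (Finset.mem_sdiff.1 h).1 (hUFS₀ f h))
      · rw [Finset.disjoint_left]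
        intro f hf hf'
        rcases Finset.mem_union.1 hf' with h | h
        · exact (hS₀unk f (Finset.mem_powerset.1 hP h)).2 (hexec.2 hf)
        · exact (Finset.disjoint_left.1 hσ)
            (hUT f (Finset.mem_sdiff.1 h).1 (hUTS₀ f h)) (hexec.2 hf)
    have happS : AppS a Δ := by
      refine ⟨⟨e, hpexte, hinje, ⟨S₀, hsensedset⟩, hstrongpre⟩, ?_⟩
      intro m hm
      obtain ⟨b, hb, rfl⟩ := (hmemΔ m).1 hm
      intro f hf
      rcases Finset.mem_union.1 (hknow b hb hf) with h | h
      · exact Finset.mem_union_left _ (Finset.mem_union_right _ h)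
      · exact Finset.mem_union_right _ (Finset.mem_union_right _ h)
    -- now analyse the chosen sensed set `SaD a Δ`
    obtain ⟨e', hpext', hinj', hss'⟩ := SaD_spec happS
    set X : Finset V := SaD a Δ with hXdef
    have hXsens : X ⊆ a.sens := hss'.2.1
    have hXS₀ : X ⊆ S₀ := by
      intro g hgX
      by_contra hgS₀
      have hgsens : g ∈ a.sens := hXsens hgX
      have hgφc : g ∈ φc.1 ∪ φc.2 := by
        obtain ⟨b₀, hb₀, -⟩ := hbranch_of ∅ (Finset.empty_subset _)
        obtain ⟨hPb₀, hbeq₀⟩ := hPb b₀ hb₀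
        rcases Finset.mem_union.1 (hknow b₀ hb₀ hgsens) with h | h
        · rw [hbeq₀] at h
          rcases Finset.mem_union.1 h with h' | h'
          · exact Finset.mem_union_left _ h'
          · exact absurd (hPb₀ h') hgS₀
        · rw [hbeq₀] at h
          rcases Finset.mem_union.1 h with h' | h'
          · exact Finset.mem_union_right _ h'
          · exact absurd (Finset.mem_sdiff.1 h').1 hgS₀
      rcases Finset.mem_union.1 hgφc with h | h
      · refine sensed_not_allT hss' hgX ?_
        intro m' hm'
        obtain ⟨m, hm, rfl⟩ := Finset.mem_image.1 hm'
        obtain ⟨b, hb, rfl⟩ := (hmemΔ m).1 hm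
        refine (hpext' _ hm).1 ?_
        refine Finset.mem_union_right _ ?_
        rw [(hPb b hb).2]
        exact Finset.mem_union_left _ h
      · refine sensed_not_allF hss' hgX ?_
        intro m' hm'
        obtain ⟨m, hm, rfl⟩ := Finset.mem_image.1 hm'
        obtain ⟨b, hb, rfl⟩ := (hmemΔ m).1 hm
        refine (hpext' _ hm).2 ?_
        refine Finset.mem_union_right _ ?_
        rw [(hPb b hb).2]
        exact Finset.mem_union_left _ h
    have hS₀X : S₀ ⊆ X := by
      intro f hf
      by_contra hfX
      obtain ⟨b₁, hb₁, hbeq₁⟩ := hbranch_of {f} (Finset.singleton_subset_iff.2 hf)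
      obtain ⟨b₂, hb₂, hbeq₂⟩ := hbranch_of ∅ (Finset.empty_subset _)
      have hPb₁ : Pb b₁ = {f} := hPbeq b₁ hb₁ {f} (Finset.singleton_subset_iff.2 hf) hbeq₁
      have hPb₂ : Pb b₂ = ∅ := hPbeq b₂ hb₂ ∅ (Finset.empty_subset _) hbeq₂
      have hm₁ : Rform b₁.1 (rb b₁) ∈ Δ := (hmemΔ _).2 ⟨b₁, hb₁, rfl⟩
      have hm₂ : Rform b₂.1 (rb b₂) ∈ Δ := (hmemΔ _).2 ⟨b₂, hb₂, rfl⟩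
      have hm₁₂ : Rform b₁.1 (rb b₁) ≠ Rform b₂.1 (rb b₂) := by
        intro hc
        have h1 := hRTS b₁ hb₁
        rw [hc, hRTS b₂ hb₂, hPb₂, hPb₁] at h1
        exact Finset.notMem_empty f (h1 ▸ Finset.mem_singleton_self f)
      -- every element of X lies in the F-part of both members
      have hallF : ∀ m ∈ Δ, (Pb ⟨b₁.1, b₁.2⟩ = {f} ∨ True) → True := fun _ _ _ => trivial
      have hXinF : ∀ g ∈ X, g ∈ (e' (Rform b₁.1 (rb b₁))).F ∧
          g ∈ (e' (Rform b₂.1 (rb b₂))).F := by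
        intro g hgX
        have hgS₀ : g ∈ S₀ := hXS₀ hgX
        have hgf : g ≠ f := fun hc => hfX (hc ▸ hgX)
        constructor
        · refine (hpext' _ hm₁).2 ?_
          have : g ∈ (Rform b₁.1 (rb b₁)).F ∩ S₀ := by
            rw [hRFS b₁ hb₁, hPb₁]
            exact Finset.mem_sdiff.2 ⟨hgS₀, fun hc => hgf (Finset.mem_singleton.1 hc)⟩
          exact (Finset.mem_inter.1 this).1
        · refine (hpext' _ hm₂).2 ?_
          have : g ∈ (Rform b₂.1 (rb b₂)).F ∩ S₀ := by
            rw [hRFS b₂ hb₂, hPb₂]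
            exact Finset.mem_sdiff.2 ⟨hgS₀, Finset.notMem_empty g⟩
          exact (Finset.mem_inter.1 this).1
      have hexact := sensedSet_exact hss'
      have hsig : ∀ m ∈ Δ, (∀ g ∈ X, g ∈ (e' m).F) →
          (e' m).T ∩ X = ∅ ∧ (e' m).F ∩ X = X := by
        intro m hm hF
        have hmem' : e' m ∈ Δ.image e' := Finset.mem_image_of_mem _ hm
        obtain ⟨hdis, huni⟩ := hexact (e' m) hmem'
        have hFX : (e' m).F ∩ X = X := by
          apply Finset.Subset.antisymm Finset.inter_subset_right
          intro g hg
          exact Finset.mem_inter.2 ⟨hF g hg, hg⟩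
        constructor
        · rw [Finset.eq_empty_iff_forall_notMem]
          intro g hg
          exact (Finset.disjoint_left.1 hdis) hg (by rw [hFX]; exact (Finset.mem_inter.1 hg).2)
        · exact hFX
      obtain ⟨hsig₁T, hsig₁F⟩ := hsig _ hm₁ (fun g hg => (hXinF g hg).1)
      obtain ⟨hsig₂T, hsig₂F⟩ := hsig _ hm₂ (fun g hg => (hXinF g hg).2)
      obtain ⟨-, -, -, -, hpart', -⟩ := hss'
      obtain ⟨m₀, -, huniq⟩ := hpart' ∅ X (Finset.disjoint_empty_left X)
        (Finset.empty_union X)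
      have e₁ := huniq (e' (Rform b₁.1 (rb b₁)))
        ⟨Finset.mem_image_of_mem _ hm₁, hsig₁T, hsig₁F⟩
      have e₂ := huniq (e' (Rform b₂.1 (rb b₂)))
        ⟨Finset.mem_image_of_mem _ hm₂, hsig₂T, hsig₂F⟩
      exact hm₁₂ (hinj' hm₁ hm₂ (e₁.trans e₂.symm))
    -- conclude
    have hregeq : RegressS a Δ =
        some ⟨Δ.sup St.T \ X ∪ a.preP, Δ.sup St.F \ X ∪ a.preN⟩ := by
      rw [RegressS, if_pos happS]
    rw [hΔ] at hregeq
    rw [hregeq] at hregstep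
    refine ⟨_, hregstep, hσ, ?_, ?_⟩
    · refine Finset.union_subset ?_ hexec.1
      intro f hf
      obtain ⟨h1, h2⟩ := Finset.mem_sdiff.1 hf
      refine hUT f ?_ (fun hc => h2 (hS₀X hc))
      rw [hΔ]
      exact h1
    · refine Finset.union_subset ?_ hexec.2
      intro f hf
      obtain ⟨h1, h2⟩ := Finset.mem_sdiff.1 hf
      refine hUF f ?_ (fun hc => h2 (hS₀X hc))
      rw [hΔ]
      exact h1

end Aux

/-- a normalized conditional plan that is regressable with respect to
`(σ,δ)` regresses to a p-state `δ' ≠ ⊥` with `σ ∈ ext(δ')`. -/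
theorem normalized_regressable_regresses
    (σ δ : St V) (hσ : σ.OK) (hδ : δ.OK)
    (c : Plan V) (hwf : c.WF) (hn : Normalized c)
    (hr : Regressable c σ δ) :
    ∃ δ' : St V, RegStarR c (some δ) (some δ') ∧ σ ∈ exts δ' := by
  exact main_aux hn σ δ hσ hδ hwf hr
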